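/- For 0 ≤ a ≤ ⌊n/2⌋ and a ≤ b ≤ n-a, the pointwise-product set G_n(a)·G_n(b) equals the union over i = 0,...,a of G_n(n-a-b+2i). -/

import Mathlib

open Pointwise

/-- Hamming weight: number of entries equal to +1. -/
def wt {n : ℕ} (X : Fin n → ℤˣ) : ℕ := (Finset.univ.filter (fun i => X i = 1)).card

/-- The set of ±1 sequences of length `n` with exactly `k` entries equal to +1. -/
def G (n k : ℕ) : Set (Fin n → ℤˣ) := {X | wt X = k}

/-- Cyclic shift by `k`: `(shift k X) i = X (i + k mod n)`. -/
def shift {n : ℕ} (k : ℕ) (X : Fin n → ℤˣ) : Fin n → ℤˣ :=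
  fun i => X ⟨((i : ℕ) + k) % n, Nat.mod_lt _ i.pos⟩

/-- Reversal of a sequence. -/
def rev {n : ℕ} (X : Fin n → ℤˣ) : Fin n → ℤˣ := fun i => X i.rev

/-- Decimation by `r`: `(dec r X) i = X (r * i mod n)`. -/
def dec {n : ℕ} (r : ℕ) (X : Fin n → ℤˣ) : Fin n → ℤˣ :=
  fun i => X ⟨(r * (i : ℕ)) % n, Nat.mod_lt _ i.pos⟩

/-- Periodic autocorrelation `P_X(k) = Σ_i x_i x_{i+k}`. -/
def P {n : ℕ} (X : Fin n → ℤˣ) (k : ℕ) : ℤ :=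
  ∑ i : Fin n, ((X i : ℤ) * ((shift k X) i : ℤ))

/-- Periodic cross-correlation `P_{X,Y}(k) = Σ_i x_i y_{i+k}`. -/
def Pc {n : ℕ} (X Y : Fin n → ℤˣ) (k : ℕ) : ℤ :=
  ∑ i : Fin n, ((X i : ℤ) * ((shift k Y) i : ℤ))

lemma units_mul_eq_one_iff (u v : ℤˣ) : u * v = 1 ↔ u = v := by
  rcases Int.units_eq_one_or u with h|h <;> rcases Int.units_eq_one_or v with h'|h' <;>
    simp [h, h']

theorem stmt1 (n a b : ℕ) (ha : a ≤ n / 2) (hab : a ≤ b) (hb : b ≤ n - a) :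
    G n a * G n b = ⋃ i ∈ Finset.range (a + 1), G n (n - a - b + 2 * i) := by
  have han : a ≤ n := le_trans ha (Nat.div_le_self n 2)
  have habn : a + b ≤ n := by omega
  ext z
  simp only [Set.mem_iUnion, Set.mem_setOf_eq, Finset.mem_range]
  constructor
  · rintro ⟨x, hx, y, hy, rfl⟩
    have hx' : wt x = a := hx
    have hy' : wt y = b := hy
    set A := Finset.univ.filter (fun j => x j = 1) with hA
    set B := Finset.univ.filter (fun j => y j = 1) with hB
    have hfilter : Finset.univ.filter (fun j => (x * y) j = 1)
        = (A ∩ B) ∪ (Aᶜ ∩ Bᶜ) := by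
      ext j
      simp only [Finset.mem_filter, Finset.mem_univ, true_and, Finset.mem_union,
        Finset.mem_inter, Finset.mem_compl, hA, hB, Pi.mul_apply]
      rw [units_mul_eq_one_iff]
      rcases Int.units_eq_one_or (x j) with h|h <;>
        rcases Int.units_eq_one_or (y j) with h'|h' <;> simp [h, h']
    have hdisj : Disjoint (A ∩ B) (Aᶜ ∩ Bᶜ) := by
      refine Finset.disjoint_left.2 ?_
      intro j hj hj'
      simp only [Finset.mem_inter, Finset.mem_compl] at hj hj'
      exact hj'.1 hj.1
    have hcompl : Aᶜ ∩ Bᶜ = (A ∪ B)ᶜ := by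
      rw [Finset.compl_union]
    have hcardU : (A ∪ B).card + (A ∩ B).card = A.card + B.card :=
      Finset.card_union_add_card_inter A B
    have hUle : (A ∪ B).card ≤ n := by
      simpa using Finset.card_le_card (Finset.subset_univ (A ∪ B))
    have hwt : wt (x * y) = (A ∩ B).card + (n - (A ∪ B).card) := by
      rw [wt, hfilter, Finset.card_union_of_disjoint hdisj, hcompl, Finset.card_compl,
        Fintype.card_fin]
    have htA : (A ∩ B).card ≤ A.card := Finset.card_le_card Finset.inter_subset_left
    have hAcard : A.card = a := hx'
    have hBcard : B.card = b := hy'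
    refine ⟨(A ∩ B).card, by omega, ?_⟩
    show wt (x * y) = n - a - b + 2 * (A ∩ B).card
    rw [hwt]
    omega
  · rintro ⟨i, hi, hz⟩
    set C := Finset.univ.filter (fun j => z j = 1) with hC
    have hCcard : C.card = n - a - b + 2 * i := hz
    have hCle : C.card ≤ n := by
      simpa using Finset.card_le_card (Finset.subset_univ C)
    have hiC : i ≤ C.card := by omega
    have hCc : Cᶜ.card = n - C.card := by
      rw [Finset.card_compl, Fintype.card_fin]
    have haiC : a - i ≤ Cᶜ.card := by omega
    obtain ⟨S, hS, hScard⟩ := Finset.exists_subset_card_eq hiC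
    obtain ⟨T, hT, hTcard⟩ := Finset.exists_subset_card_eq haiC
    have hST : Disjoint S T := by
      refine Finset.disjoint_left.2 fun j hj hj' => ?_
      exact (Finset.mem_compl.1 (hT hj')) (hS hj)
    set x : Fin n → ℤˣ := fun j => if j ∈ S ∪ T then 1 else -1 with hxdef
    set y : Fin n → ℤˣ := fun j => x j * z j with hydef
    have hxy : x * y = z := by
      funext j
      show x j * (x j * z j) = z j
      rw [← mul_assoc, Int.units_mul_self, one_mul]
    have hxfilter : Finset.univ.filter (fun j => x j = 1) = S ∪ T := by
      ext j
      simp only [Finset.mem_filter, Finset.mem_univ, true_and, hxdef]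
      by_cases h : j ∈ S ∪ T <;> simp [h]
    have hwx : wt x = a := by
      rw [wt, hxfilter, Finset.card_union_of_disjoint hST, hScard, hTcard]
      omega
    have hyfilter : Finset.univ.filter (fun j => y j = 1) = S ∪ (Cᶜ \ T) := by
      ext j
      simp only [Finset.mem_filter, Finset.mem_univ, true_and, hydef]
      rw [units_mul_eq_one_iff]
      by_cases hjC : j ∈ C
      · have hz1 : z j = 1 := (Finset.mem_filter.1 hjC).2
        have hjT : j ∉ T := fun h => (Finset.mem_compl.1 (hT h)) hjC
        by_cases hjS : j ∈ S
        · simp [hxdef, hjS, hz1, hjS]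
        · have : j ∉ S ∪ T := by simp [hjS, hjT]
          simp only [hxdef, this, if_neg]
          simp [hz1, hjS, Finset.mem_sdiff, Finset.mem_compl, hjC]
      · have hz1 : z j ≠ 1 := fun h => hjC (by simp [hC, h])
        have hzneg : z j = -1 := by
          rcases Int.units_eq_one_or (z j) with h|h
          · exact absurd h hz1
          · exact h
        have hjS : j ∉ S := fun h => hjC (hS h)
        by_cases hjT : j ∈ T
        · have : j ∈ S ∪ T := by simp [hjT]
          simp [hxdef, this, hzneg, hjS, hjT]
        · have : j ∉ S ∪ T := by simp [hjS, hjT]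
          simp [hxdef, this, hzneg, hjS, hjT, Finset.mem_sdiff, Finset.mem_compl, hjC]
    have hSdisj : Disjoint S (Cᶜ \ T) := by
      refine Finset.disjoint_left.2 fun j hj hj' => ?_
      exact Finset.mem_compl.1 (Finset.mem_sdiff.1 hj').1 (hS hj)
    have hwy : wt y = b := by
      rw [wt, hyfilter, Finset.card_union_of_disjoint hSdisj, hScard,
        Finset.card_sdiff_of_subset hT, hTcard, hCc]
      omega
    exact ⟨x, hwx, y, hwy, hxy⟩
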